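/- If a set of permutation matrices of size d×d spans a complex vector space of dimension r, then the set contains at most 2^{r−1} distinct matrices, and this bound is tight: for every r ≥ 1 there exist 2^{r−1} distinct permutation matrices of size (2r−2)×(2r−2) spanning an r-dimensional space (for r ≥ 2). -/

import Mathlib

/-- A `d × d` permutation matrix over `ℂ`. -/
def IsPermMatrix {d : ℕ} (M : Matrix (Fin d) (Fin d) ℂ) : Prop :=
  ∃ σ : Equiv.Perm (Fin d), ∀ i j, M i j = if i = σ j then 1 else 0

open Module Submodule

/-- evaluation functional at entry (i,j) -/
noncomputable def evalLM {d : ℕ} (i j : Fin d) : Matrix (Fin d) (Fin d) ℂ →ₗ[ℂ] ℂ where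
  toFun M := M i j
  map_add' _ _ := rfl
  map_smul' _ _ := rfl

/-- row sum functional -/
noncomputable def rowLM {d : ℕ} (i : Fin d) : Matrix (Fin d) (Fin d) ℂ →ₗ[ℂ] ℂ where
  toFun M := ∑ j, M i j
  map_add' A B := by simp [Finset.sum_add_distrib]
  map_smul' c A := by simp [Finset.mul_sum]

lemma cube (d : ℕ) (i0 : Fin d) (r : ℕ) :
    ∀ S : Set (Matrix (Fin d) (Fin d) ℂ), S.Finite →
    (∀ M ∈ S, ∀ i j, M i j = 0 ∨ M i j = 1) →
    (∀ M ∈ S, ∑ j, M i0 j = 1) →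
    Module.finrank ℂ ↥(Submodule.span ℂ S) = r → S.ncard ≤ 2 ^ (r - 1) := by
  induction r using Nat.strong_induction_on with
  | _ r IH =>
    intro S hfin h01 hsum hr
    by_cases hcard : S.ncard ≤ 1
    · calc S.ncard ≤ 1 := hcard
        _ ≤ 2 ^ (r - 1) := Nat.one_le_two_pow
    · push_neg at hcard
      obtain ⟨M, N, hM, hN, hMN⟩ := (Set.one_lt_ncard_iff hfin).mp hcard
      have hij : ∃ i j, M i j ≠ N i j := by
        by_contra h
        push_neg at h
        exact hMN (by ext i j; exact h i j)
      obtain ⟨i, j, hij⟩ := hij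
      set S0 : Set (Matrix (Fin d) (Fin d) ℂ) := {A ∈ S | A i j = 0} with hS0
      set S1 : Set (Matrix (Fin d) (Fin d) ℂ) := {A ∈ S | A i j = 1} with hS1
      have hunion : S = S0 ∪ S1 := by
        ext A
        constructor
        · intro hA
          rcases h01 A hA i j with h | h
          · exact Or.inl ⟨hA, h⟩
          · exact Or.inr ⟨hA, h⟩
        · rintro (⟨h, _⟩ | ⟨h, _⟩) <;> exact h
      have hdisj : Disjoint S0 S1 := by
        rw [Set.disjoint_left]
        rintro A ⟨_, h0⟩ ⟨_, h1⟩
        rw [h0] at h1; exact zero_ne_one h1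
      -- S0 and S1 nonempty
      have hne : S0.Nonempty ∧ S1.Nonempty := by
        rcases h01 M hM i j with hM0 | hM1
        · rcases h01 N hN i j with hN0 | hN1
          · exact absurd (hM0.trans hN0.symm) hij
          · exact ⟨⟨M, hM, hM0⟩, ⟨N, hN, hN1⟩⟩
        · rcases h01 N hN i j with hN0 | hN1
          · exact ⟨⟨N, hN, hN0⟩, ⟨M, hM, hM1⟩⟩
          · exact absurd (hM1.trans hN1.symm) hij
      obtain ⟨⟨M0, hM0S, hM00⟩, ⟨M1, hM1S, hM11⟩⟩ := hne
      -- the two functionals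
      have key : ∀ (ψ : Matrix (Fin d) (Fin d) ℂ →ₗ[ℂ] ℂ) (T : Set (Matrix (Fin d) (Fin d) ℂ)),
          T ⊆ S → (∀ A ∈ T, ψ A = 0) → (∃ B ∈ S, ψ B ≠ 0) →
          Module.finrank ℂ ↥(Submodule.span ℂ T) < r := by
        intro ψ T hTS hT0 ⟨B, hBS, hB⟩
        have hle : span ℂ T ≤ span ℂ S ⊓ LinearMap.ker ψ := by
          apply span_le.mpr
          intro A hA
          exact ⟨subset_span (hTS hA), hT0 A hA⟩
        have hlt : span ℂ S ⊓ LinearMap.ker ψ < span ℂ S := by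
          refine lt_of_le_of_ne inf_le_left ?_
          intro h
          have : (B : Matrix (Fin d) (Fin d) ℂ) ∈ span ℂ S ⊓ LinearMap.ker ψ := by
            rw [h]; exact subset_span hBS
          exact hB this.2
        calc Module.finrank ℂ ↥(span ℂ T) ≤ Module.finrank ℂ ↥(span ℂ S ⊓ LinearMap.ker ψ) :=
              Submodule.finrank_mono hle
          _ < Module.finrank ℂ ↥(span ℂ S) := Submodule.finrank_lt_finrank_of_lt hlt
          _ = r := hr
      have hr0 : Module.finrank ℂ ↥(span ℂ S0) < r := by
        apply key (evalLM i j) S0 (fun A hA => hA.1) (fun A hA => hA.2)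
        exact ⟨M1, hM1S, by show M1 i j ≠ 0; simp [evalLM, hM11]⟩
      have hr1 : Module.finrank ℂ ↥(span ℂ S1) < r := by
        apply key (rowLM i0 - evalLM i j) S1 (fun A hA => hA.1)
        · intro A hA
          show (∑ k, A i0 k) - A i j = 0
          simp [rowLM, evalLM, hsum A hA.1, hA.2]
        · refine ⟨M0, hM0S, ?_⟩
          show (∑ k, M0 i0 k) - M0 i j ≠ 0
          simp [rowLM, evalLM, hsum M0 hM0S, hM00]
      -- positivity : span S0 is nontrivial
      have hpos : 0 < Module.finrank ℂ ↥(span ℂ S0) := by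
        have hM0ne : M0 ≠ 0 := by
          intro h
          have := hsum M0 hM0S
          rw [h] at this
          simp at this
        have : Nontrivial ↥(span ℂ S0) := by
          refine ⟨⟨M0, subset_span ⟨hM0S, hM00⟩⟩, 0, ?_⟩
          simp [hM0ne]
        exact Module.finrank_pos
      have hr2 : 2 ≤ r := by omega
      have e0 := IH _ hr0 S0 (hfin.subset (fun A hA => hA.1)) (fun A hA => h01 A hA.1)
        (fun A hA => hsum A hA.1) rfl
      have e1 := IH _ hr1 S1 (hfin.subset (fun A hA => hA.1)) (fun A hA => h01 A hA.1)
        (fun A hA => hsum A hA.1) rfl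
      have hsplit : S.ncard = S0.ncard + S1.ncard := by
        rw [hunion]
        exact Set.ncard_union_eq hdisj (hfin.subset (fun A hA => hA.1))
          (hfin.subset (fun A hA => hA.1))
      have b0 : S0.ncard ≤ 2 ^ (r - 2) :=
        e0.trans (Nat.pow_le_pow_right (by norm_num) (by omega))
      have b1 : S1.ncard ≤ 2 ^ (r - 2) :=
        e1.trans (Nat.pow_le_pow_right (by norm_num) (by omega))
      have : 2 ^ (r - 2) + 2 ^ (r - 2) = 2 ^ (r - 1) := by
        have : r - 1 = (r - 2) + 1 := by omega
        rw [this, pow_succ]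
        ring
      omega

lemma partA (d r : ℕ) (S : Set (Matrix (Fin d) (Fin d) ℂ))
    (hS : ∀ M ∈ S, IsPermMatrix M)
    (hr : Module.finrank ℂ ↥(Submodule.span ℂ S) = r) : S.ncard ≤ 2 ^ (r - 1) := by
  rcases Nat.eq_zero_or_pos d with hd | hd
  · subst hd
    have : S.Subsingleton := fun A hA B hB => Subsingleton.elim A B
    calc S.ncard ≤ 1 := (Set.ncard_le_one (Set.Finite.subset (Set.finite_singleton 0) (fun A _ => Subsingleton.elim A 0))).mpr (fun a _ b _ => Subsingleton.elim a b)
      _ ≤ 2 ^ (r - 1) := Nat.one_le_two_pow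
  · have hfin : S.Finite := by
      have : S ⊆ (fun σ : Equiv.Perm (Fin d) =>
          (Matrix.of fun i j => if i = σ j then (1:ℂ) else 0)) '' Set.univ := by
        intro M hM
        obtain ⟨σ, hσ⟩ := hS M hM
        exact ⟨σ, Set.mem_univ σ, by ext i j; exact (hσ i j).symm⟩
      exact Set.Finite.subset (Set.finite_univ.image _) this
    apply cube d ⟨0, hd⟩ r S hfin
    · intro M hM i j
      obtain ⟨σ, hσ⟩ := hS M hM
      rw [hσ]
      split_ifs <;> simp
    · intro M hM
      obtain ⟨σ, hσ⟩ := hS M hM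
      simp only [hσ]
      rw [Fintype.sum_equiv σ _ (fun y => if (⟨0, hd⟩ : Fin d) = y then (1:ℂ) else 0) (fun x => rfl)]
      simp
    · exact hr

def swapPerm (m : ℕ) (ε : Fin m → Bool) : Equiv.Perm (Fin m × Bool) where
  toFun p := (p.1, xor (ε p.1) p.2)
  invFun p := (p.1, xor (ε p.1) p.2)
  left_inv p := by cases p with | mk k b => simp [Bool.xor_left_comm]
  right_inv p := by cases p with | mk k b => simp [Bool.xor_left_comm]

noncomputable def pmat (m : ℕ) (ε : Fin m → Bool) : Matrix (Fin m × Bool) (Fin m × Bool) ℂ :=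
  Matrix.of fun x y => if x = swapPerm m ε y then 1 else 0

lemma pmat_apply (m : ℕ) (ε : Fin m → Bool) (k l : Fin m) (b c : Bool) :
    pmat m ε (k, b) (l, c) = if k = l ∧ b = xor (ε l) c then 1 else 0 := by
  simp [pmat, swapPerm, Equiv.coe_fn_mk, Prod.ext_iff]

lemma bool_cond (b c d : Bool) : (b = xor d c) ↔ (xor b c = d) := by
  cases b <;> cases c <;> cases d <;> decide

lemma pmat_inj (m : ℕ) : Function.Injective (pmat m) := by
  intro ε ε' h
  funext k
  have := congrFun (congrFun h (k, true)) (k, false)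
  rw [pmat_apply, pmat_apply] at this
  simp only [true_and] at this
  cases hk : ε k <;> cases hk' : ε' k <;> simp [hk, hk'] at this <;> rfl

noncomputable def vfam (m : ℕ) : Option (Fin m) → Matrix (Fin m × Bool) (Fin m × Bool) ℂ
  | none => pmat m (fun _ => false)
  | some k => pmat m (fun j => decide (j = k))

lemma sumPick (m : ℕ) (a : Fin m → ℂ) (k : Fin m) :
    ∑ j, a j * (if j = k then 1 else 0) = a k := by
  rw [Finset.sum_congr rfl (fun j _ => (mul_ite _ _ _ _).trans (by rw [mul_one, mul_zero]))]
  rw [Finset.sum_ite_eq' Finset.univ k a]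
  simp

lemma sumNePick (m : ℕ) (a : Fin m → ℂ) (k : Fin m) :
    ∑ j, a j * (if j = k then 0 else 1) = (∑ j, a j) - a k := by
  rw [eq_sub_iff_add_eq, ← sumPick m a k, ← Finset.sum_add_distrib]
  apply Finset.sum_congr rfl
  intro j _
  split_ifs <;> ring

lemma pmat_comb (m : ℕ) (ε : Fin m → Bool) :
    pmat m ε = (∑ k : Fin m, (if ε k then (1:ℂ) else 0) • vfam m (some k))
      + ((1:ℂ) - ∑ k, (if ε k then (1:ℂ) else 0)) • vfam m none := by
  ext ⟨k, b⟩ ⟨l, c⟩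
  simp only [Matrix.add_apply, Matrix.sum_apply, Matrix.smul_apply, smul_eq_mul, vfam,
    pmat_apply]
  by_cases hkl : k = l
  · subst hkl
    simp only [true_and, if_true, bool_cond, Bool.xor_false]
    rcases Bool.eq_false_or_eq_true (xor b c) with he | he <;> rw [he]
    · -- xor b c = true : inner condition true = decide (k = j) means j = k
      have h1 : ∀ j : Fin m, (if (true : Bool) = decide (k = j) then (1:ℂ) else 0)
          = (if j = k then 1 else 0) := by
        intro j
        by_cases h : j = k
        · simp [h]
        · simp [h, Ne.symm h]
      simp only [h1, sumPick]
      cases hek : ε k <;> simp [hek]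
    · have h1 : ∀ j : Fin m, (if (false : Bool) = decide (k = j) then (1:ℂ) else 0)
          = (if j = k then 0 else 1) := by
        intro j
        by_cases h : j = k
        · simp [h]
        · simp [h, Ne.symm h]
      simp only [h1, sumNePick]
      cases hek : ε k <;> simp [hek]
  · simp [hkl]

lemma pmat_mem_span (m : ℕ) (ε : Fin m → Bool) :
    pmat m ε ∈ span ℂ (Set.range (vfam m)) := by
  rw [pmat_comb m ε]
  apply Submodule.add_mem
  · exact Submodule.sum_mem _ (fun k _ =>
      Submodule.smul_mem _ _ (subset_span ⟨some k, rfl⟩))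
  · exact Submodule.smul_mem _ _ (subset_span ⟨none, rfl⟩)

lemma vfam_li (m : ℕ) (hm : 1 ≤ m) : LinearIndependent ℂ (vfam m) := by
  rw [Fintype.linearIndependent_iff]
  intro g hg
  have hsome : ∀ k : Fin m, g (some k) = 0 := by
    intro k
    have h := congrFun (congrFun hg (k, true)) (k, false)
    simp only [Matrix.sum_apply, Matrix.smul_apply, smul_eq_mul, Matrix.zero_apply] at h
    rw [Fintype.sum_option] at h
    simp only [vfam, pmat_apply, Bool.xor_false, true_and] at h
    have h1 : ∀ j : Fin m, (if (true : Bool) = decide (k = j) then (1:ℂ) else 0)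
        = (if j = k then 1 else 0) := by
      intro j
      by_cases hj : j = k
      · simp [hj]
      · simp [hj, Ne.symm hj]
    rw [show (if (true : Bool) = false then (1:ℂ) else 0) = 0 by simp] at h
    simp only [h1, mul_zero, zero_add, sumPick] at h
    exact h
  intro i
  cases i with
  | some k => exact hsome k
  | none =>
    have k0 : Fin m := ⟨0, hm⟩
    have h := congrFun (congrFun hg ((⟨0, hm⟩ : Fin m), false)) ((⟨0, hm⟩ : Fin m), false)
    simp only [Matrix.sum_apply, Matrix.smul_apply, smul_eq_mul, Matrix.zero_apply] at h
    rw [Fintype.sum_option] at h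
    simp only [vfam, pmat_apply, Bool.xor_false, true_and, hsome, zero_mul,
      Finset.sum_const_zero, add_zero] at h
    simpa using h

lemma span_pmat_eq (m : ℕ) :
    span ℂ (Set.range (pmat m)) = span ℂ (Set.range (vfam m)) := by
  apply le_antisymm
  · rw [span_le]
    rintro _ ⟨ε, rfl⟩
    exact pmat_mem_span m ε
  · rw [span_le]
    rintro _ ⟨o, rfl⟩
    cases o with
    | none => exact subset_span ⟨fun _ => false, rfl⟩
    | some k => exact subset_span ⟨fun j => decide (j = k), rfl⟩

lemma finrank_pmat (m : ℕ) (hm : 1 ≤ m) :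
    Module.finrank ℂ ↥(span ℂ (Set.range (pmat m))) = m + 1 := by
  rw [span_pmat_eq, finrank_span_eq_card (vfam_li m hm)]
  simp

lemma ncard_pmat (m : ℕ) : (Set.range (pmat m)).ncard = 2 ^ m := by
  rw [← Set.image_univ, Set.ncard_image_of_injective _ (pmat_inj m), Set.ncard_univ]
  simp [Nat.card_eq_fintype_card]

lemma partB (r : ℕ) (hr : 2 ≤ r) :
    ∃ S : Set (Matrix (Fin (2 * r - 2)) (Fin (2 * r - 2)) ℂ),
      (∀ M ∈ S, IsPermMatrix M) ∧ S.ncard = 2 ^ (r - 1) ∧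
      Module.finrank ℂ ↥(Submodule.span ℂ S) = r := by
  set m := r - 1 with hm
  have hm1 : 1 ≤ m := by omega
  have hd : m * 2 = 2 * r - 2 := by omega
  let E : (Fin m × Bool) ≃ Fin (2 * r - 2) :=
    ((Equiv.prodCongr (Equiv.refl (Fin m)) finTwoEquiv.symm).trans finProdFinEquiv).trans
      (finCongr hd)
  let L := Matrix.reindexLinearEquiv ℂ ℂ E E
  refine ⟨⇑L '' Set.range (pmat m), ?_, ?_, ?_⟩
  · rintro _ ⟨_, ⟨ε, rfl⟩, rfl⟩
    refine ⟨E.permCongr (swapPerm m ε), fun i j => ?_⟩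
    show Matrix.reindexLinearEquiv ℂ ℂ E E (pmat m ε) i j = _
    rw [Matrix.reindexLinearEquiv_apply, Matrix.reindex_apply, Matrix.submatrix_apply]
    show (if E.symm i = swapPerm m ε (E.symm j) then (1:ℂ) else 0) = _
    rw [Equiv.permCongr_apply]
    congr 1
    rw [Equiv.symm_apply_eq]
  · rw [Set.ncard_image_of_injective _ L.injective, ncard_pmat]
  · rw [show ⇑L '' Set.range (pmat m) = ⇑(L : Matrix (Fin m × Bool) (Fin m × Bool) ℂ →ₗ[ℂ] Matrix (Fin (2*r-2)) (Fin (2*r-2)) ℂ) '' Set.range (pmat m) from rfl, Submodule.span_image]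
    have hmap : map (L : Matrix (Fin m × Bool) (Fin m × Bool) ℂ →ₗ[ℂ] Matrix (Fin (2*r-2)) (Fin (2*r-2)) ℂ) (span ℂ (Set.range (pmat m)))
        = map (L : Matrix (Fin m × Bool) (Fin m × Bool) ℂ →ₗ[ℂ] Matrix (Fin (2*r-2)) (Fin (2*r-2)) ℂ) (span ℂ (Set.range (pmat m))) := rfl
    rw [hmap, LinearEquiv.finrank_map_eq, finrank_pmat m hm1]
    omega

theorem stmt6 :
    (∀ (d r : ℕ) (S : Set (Matrix (Fin d) (Fin d) ℂ)),
      (∀ M ∈ S, IsPermMatrix M) →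
      Module.finrank ℂ ↥(Submodule.span ℂ S) = r →
      S.ncard ≤ 2 ^ (r - 1)) ∧
    (∀ r : ℕ, 2 ≤ r →
      ∃ S : Set (Matrix (Fin (2 * r - 2)) (Fin (2 * r - 2)) ℂ),
        (∀ M ∈ S, IsPermMatrix M) ∧ S.ncard = 2 ^ (r - 1) ∧
        Module.finrank ℂ ↥(Submodule.span ℂ S) = r) :=
  ⟨partA, partB⟩
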